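/- Let G be a finite group, k a field, and f : G → k a class function (f(g⁻¹ h g) = f(h) for all g, h ∈ G). If the automorphism group Aut(Cay(f)) of the Cayley evolution algebra Cay(f) is isomorphic to G, then G is abelian. -/

import Mathlib

open scoped BigOperators

variable {k : Type*} [Field k] {G : Type*} [Group G] [Fintype G] [DecidableEq G]

/-- The Cayley evolution product on the group algebra `k[G]` (realized as `G → k`):
it is the `k`-bilinear product with `δ_g · δ_g = ∑ h, f (g⁻¹ * h) • δ_h` and
`δ_g · δ_{g'} = 0` for `g ≠ g'`. -/
def cayMul (f : G → k) (x y : G → k) : G → k :=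
  fun h => ∑ g : G, x g * y g * f (g⁻¹ * h)

/-- The automorphism group of the Cayley evolution algebra `Cay(f)`: the `k`-linear
bijections of `k[G]` preserving the Cayley evolution product. -/
def cayAut (f : G → k) : Subgroup ((G → k) ≃ₗ[k] (G → k)) where
  carrier := {φ | ∀ x y, φ (cayMul f x y) = cayMul f (φ x) (φ y)}
  one_mem' := fun _ _ => rfl
  mul_mem' := by
    intro a b ha hb x y
    replace ha : ∀ x y, a (cayMul f x y) = cayMul f (a x) (a y) := ha
    replace hb : ∀ x y, b (cayMul f x y) = cayMul f (b x) (b y) := hb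
    show a (b (cayMul f x y)) = cayMul f (a (b x)) (a (b y))
    rw [hb, ha]
  inv_mem' := by
    intro a ha x y
    replace ha : ∀ x y, a (cayMul f x y) = cayMul f (a x) (a y) := ha
    show a.symm (cayMul f x y) = cayMul f (a.symm x) (a.symm y)
    apply a.injective
    rw [ha, a.apply_symm_apply, a.apply_symm_apply, a.apply_symm_apply]

/-- `Cay(f)` is simple: the product is not identically zero and the only ideals
(`k`-subspaces `I` with `k[G] · I ⊆ I`) are `0` and `k[G]`. -/
def CaySimple (f : G → k) : Prop :=
  (∃ x y : G → k, cayMul f x y ≠ 0) ∧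
  ∀ I : Submodule k (G → k), (∀ x y : G → k, y ∈ I → cayMul f x y ∈ I) → I = ⊥ ∨ I = ⊤

/-- The structure matrix of `Cay(f)`: its `(h, g)` entry is `f (g⁻¹ * h)`. -/
def structMatrix (f : G → k) : Matrix G G k := Matrix.of fun h g => f (g⁻¹ * h)


/-- Left translation on `k[G]`. -/
def cayL (k : Type*) [Field k] {G : Type*} [Group G] (g : G) :
    (G → k) ≃ₗ[k] (G → k) where
  toFun x := fun z => x (g⁻¹ * z)
  invFun x := fun z => x (g * z)
  map_add' _ _ := rfl
  map_smul' _ _ := rfl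
  left_inv x := by funext z; simp
  right_inv x := by funext z; simp

/-- Right translation on `k[G]`. -/
def cayR (k : Type*) [Field k] {G : Type*} [Group G] (g : G) :
    (G → k) ≃ₗ[k] (G → k) where
  toFun x := fun z => x (z * g)
  invFun x := fun z => x (z * g⁻¹)
  map_add' _ _ := rfl
  map_smul' _ _ := rfl
  left_inv x := by funext z; simp
  right_inv x := by funext z; simp

lemma cayL_mem (f : G → k) (g : G) : cayL k g ∈ cayAut f := by
  intro x y
  funext h
  show (∑ a : G, x a * y a * f (a⁻¹ * (g⁻¹ * h)))
      = ∑ a : G, x (g⁻¹ * a) * y (g⁻¹ * a) * f (a⁻¹ * h)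
  apply Fintype.sum_equiv (Equiv.mulLeft g)
  intro a
  simp [mul_assoc]

lemma cayR_mem (f : G → k) (hf : ∀ g h : G, f (g⁻¹ * h * g) = f h) (g : G) :
    cayR k g ∈ cayAut f := by
  intro x y
  funext h
  show (∑ a : G, x a * y a * f (a⁻¹ * (h * g)))
      = ∑ a : G, x (a * g) * y (a * g) * f (a⁻¹ * h)
  apply Fintype.sum_equiv (Equiv.mulRight g⁻¹)
  intro a
  simp only [Equiv.coe_mulRight, inv_mul_cancel_right, mul_inv_rev, inv_inv]
  have harg : a⁻¹ * (h * g) = g⁻¹ * (g * a⁻¹ * h) * g := by group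
  rw [harg, hf]

/-- If `f : G → k` is a class function and `Aut(Cay(f)) ≅ G`, then `G`
is abelian. -/
theorem class_function_realization_implies_abelian {G : Type*} [Group G] [Fintype G]
    [DecidableEq G] {k : Type*} [Field k] (f : G → k)
    (hf : ∀ g h : G, f (g⁻¹ * h * g) = f h)
    (hiso : Nonempty (↥(cayAut f) ≃* G)) :
    ∀ a b : G, a * b = b * a := by
  obtain ⟨e⟩ := hiso
  haveI : Fintype ↥(cayAut f) := Fintype.ofEquiv G e.toEquiv.symm
  have hcard : Fintype.card ↥(cayAut f) = Fintype.card G := Fintype.card_congr e.toEquiv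
  set Ls : G → ↥(cayAut f) := fun g => ⟨cayL k g, cayL_mem f g⟩ with hLs
  set Rs : G → ↥(cayAut f) := fun g => ⟨cayR k g, cayR_mem f hf g⟩ with hRs
  have hLinj : Function.Injective Ls := by
    intro g₁ g₂ hgg
    have h1 : cayL (G := G) k g₁ = cayL k g₂ := congrArg Subtype.val hgg
    have h2 := congrFun (congrArg
      (fun (u : (G → k) ≃ₗ[k] (G → k)) => u (Pi.single (1 : G) (1 : k))) h1) g₁
    simp only [cayL, LinearEquiv.coe_mk, LinearMap.coe_mk, AddHom.coe_mk, Equiv.coe_fn_mk, Pi.single_apply,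
      inv_mul_cancel] at h2
    by_contra hne
    rw [if_true, if_neg (fun hcon => hne (inv_mul_eq_one.mp hcon).symm)] at h2
    exact one_ne_zero h2
  have hRinj : Function.Injective Rs := by
    intro g₁ g₂ hgg
    have h1 : cayR (G := G) k g₁ = cayR k g₂ := congrArg Subtype.val hgg
    have h2 := congrFun (congrArg
      (fun (u : (G → k) ≃ₗ[k] (G → k)) => u (Pi.single (1 : G) (1 : k))) h1) g₁⁻¹
    simp only [cayR, LinearEquiv.coe_mk, LinearMap.coe_mk, AddHom.coe_mk, Equiv.coe_fn_mk, Pi.single_apply,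
      inv_mul_cancel] at h2
    by_contra hne
    rw [if_true, if_neg (fun hcon => hne (inv_mul_eq_one.mp hcon))] at h2
    exact one_ne_zero h2
  have hLsurj : Function.Surjective Ls :=
    ((Fintype.bijective_iff_injective_and_card Ls).2 ⟨hLinj, hcard.symm⟩).2
  have hRsurj : Function.Surjective Rs :=
    ((Fintype.bijective_iff_injective_and_card Rs).2 ⟨hRinj, hcard.symm⟩).2
  have hcomm : ∀ u v : ↥(cayAut f), u * v = v * u := by
    intro u v
    obtain ⟨g₁, rfl⟩ := hLsurj u
    obtain ⟨g₂, rfl⟩ := hRsurj v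
    apply Subtype.ext
    show (cayL (G := G) k g₁ * cayR k g₂ : _) = cayR k g₂ * cayL k g₁
    apply LinearEquiv.ext
    intro x
    show cayL (G := G) k g₁ (cayR k g₂ x) = cayR k g₂ (cayL k g₁ x)
    simp only [cayL, cayR, LinearEquiv.coe_mk, LinearMap.coe_mk, AddHom.coe_mk, Equiv.coe_fn_mk]
    funext z
    rw [mul_assoc]
  intro a b
  have := congrArg e (hcomm (e.symm a) (e.symm b))
  simpa using this
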